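/- For every integer m ≥ 0 there exist 2^{2m+1} dyadic squares Q₁, ..., Q_{2^{2m+1}} contained in [0,1)², each of side length 2^{-2m-1}, such that for any i ≠ j, every dyadic rectangle intersecting both Q_i and Q_j has area at least 2^{-2m}. -/

import Mathlib

open MeasureTheory
open scoped ENNReal

/-- A dyadic interval `[k·2^n, (k+1)·2^n)`. -/
def IsDyadicInterval (I : Set ℝ) : Prop :=
  ∃ k n : ℤ, I = Set.Ico ((k : ℝ) * 2 ^ n) (((k : ℝ) + 1) * 2 ^ n)

/-- An axis-parallel dyadic rectangle in the plane. -/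
def IsDyadicRect (R : Set (ℝ × ℝ)) : Prop :=
  ∃ I J : Set ℝ, IsDyadicInterval I ∧ IsDyadicInterval J ∧ R = I ×ˢ J

/-- A dyadic square of side length `2^s`. -/
def IsDyadicSquare (s : ℤ) (Q : Set (ℝ × ℝ)) : Prop :=
  ∃ k l : ℤ, Q = Set.Ico ((k : ℝ) * 2 ^ s) (((k : ℝ) + 1) * 2 ^ s) ×ˢ
      Set.Ico ((l : ℝ) * 2 ^ s) (((l : ℝ) + 1) * 2 ^ s)

def unitSq : Set (ℝ × ℝ) := Set.Ico (0 : ℝ) 1 ×ˢ Set.Ico (0 : ℝ) 1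

/-- Bit reversal of the last `n` binary digits. -/
def bitrev : ℕ → ℕ → ℕ
  | 0, _ => 0
  | n+1, i => (i % 2) * 2 ^ n + bitrev n (i / 2)

lemma bitrev_lt : ∀ n i, bitrev n i < 2 ^ n := by
  intro n
  induction n with
  | zero => intro i; simp [bitrev]
  | succ n ih =>
    intro i
    have h1 := ih (i / 2)
    have h2 : i % 2 ≤ 1 := by omega
    have h3 : (i % 2) * 2 ^ n ≤ 1 * 2 ^ n := Nat.mul_le_mul_right _ h2
    have e : 2 ^ (n+1) = 2 ^ n + 2 ^ n := by ring
    simp only [bitrev]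
    omega

lemma bitrev_inj : ∀ n i j, i < 2 ^ n → j < 2 ^ n → bitrev n i = bitrev n j → i = j := by
  intro n
  induction n with
  | zero => intro i j hi hj _; omega
  | succ n ih =>
    intro i j hi hj h
    simp only [bitrev] at h
    have b1 := bitrev_lt n (i / 2)
    have b2 := bitrev_lt n (j / 2)
    have hi2 : i / 2 < 2 ^ n := by omega
    have hj2 : j / 2 < 2 ^ n := by omega
    rcases Nat.mod_two_eq_zero_or_one i with h1 | h1 <;>
      rcases Nat.mod_two_eq_zero_or_one j with h2 | h2 <;>
      simp [h1, h2] at h <;>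
      first
      | (have := ih _ _ hi2 hj2 h; omega)
      | omega

lemma bitrev_div : ∀ n s i, s ≤ n → bitrev n i / 2 ^ (n - s) = bitrev s (i % 2 ^ s) := by
  intro n
  induction n with
  | zero => intro s i hs; interval_cases s; simp [bitrev]
  | succ n ih =>
    intro s i hs
    cases s with
    | zero =>
      simp only [bitrev, Nat.sub_zero]
      exact Nat.div_eq_of_lt (bitrev_lt (n+1) i)
    | succ s =>
      have hs' : s ≤ n := by omega
      have e1 : n + 1 - (s + 1) = n - s := by omega
      have e2 : 2 ^ n = 2 ^ s * 2 ^ (n - s) := by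
        rw [← pow_add]; congr 1; omega
      simp only [bitrev, e1]
      have key : (i % 2) * 2 ^ n + bitrev n (i / 2)
          = bitrev n (i / 2) + ((i % 2) * 2 ^ s) * 2 ^ (n - s) := by
        rw [e2]; ring
      rw [key, Nat.add_mul_div_right _ _ (Nat.pow_pos (by norm_num)), ih s (i/2) hs']
      have m1 : i % 2 ^ (s+1) % 2 = i % 2 := by
        rw [Nat.mod_mod_of_dvd _ (dvd_pow_self 2 (Nat.succ_ne_zero s))]
      have m2 : i % 2 ^ (s+1) / 2 = i / 2 % 2 ^ s := by
        rw [pow_succ']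
        exact Nat.mod_mul_right_div_self i 2 (2 ^ s)
      simp only [bitrev, m1, m2]
      ring

lemma key_lemma (n p q i j : ℕ) (hi : i < 2 ^ n) (hj : j < 2 ^ n) (hpq : p + q ≤ n)
    (h1 : i / 2 ^ p = j / 2 ^ p) (h2 : bitrev n i / 2 ^ q = bitrev n j / 2 ^ q) : i = j := by
  have hq : q ≤ n := by omega
  have e : q = n - (n - q) := by omega
  rw [e] at h2
  rw [bitrev_div n (n - q) i (by omega), bitrev_div n (n - q) j (by omega)] at h2
  have hmod : i % 2 ^ (n - q) = j % 2 ^ (n - q) :=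
    bitrev_inj _ _ _ (Nat.mod_lt _ (Nat.pow_pos (by norm_num)))
      (Nat.mod_lt _ (Nat.pow_pos (by norm_num))) h2
  have hmp : i % 2 ^ p = j % 2 ^ p := by
    have hd : (2:ℕ) ^ p ∣ 2 ^ (n - q) := pow_dvd_pow 2 (by omega)
    rw [← Nat.mod_mod_of_dvd i hd, ← Nat.mod_mod_of_dvd j hd, hmod]
  have d1 := Nat.div_add_mod i (2 ^ p)
  have d2 := Nat.div_add_mod j (2 ^ p)
  rw [h1, hmp] at d1; omega

lemma meet (k n : ℤ) (a N : ℕ)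
    (h : (Set.Ico ((k:ℝ) * 2 ^ n) (((k:ℝ) + 1) * 2 ^ n) ∩
          Set.Ico ((a:ℝ) * 2 ^ (-(N:ℤ))) (((a:ℝ) + 1) * 2 ^ (-(N:ℤ)))).Nonempty) :
    (1 ≤ n + (N:ℤ) ∧ 0 ≤ k ∧ a / 2 ^ (n + (N:ℤ)).toNat = k.toNat) ∨
    (n + (N:ℤ) ≤ 0 ∧ 0 ≤ k ∧ k.toNat / 2 ^ (-(n + (N:ℤ))).toNat = a) := by
  obtain ⟨x, hx1, hx2⟩ := h
  rw [Set.mem_Ico] at hx1 hx2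
  have h1 : (k:ℝ) * 2 ^ n < ((a:ℝ) + 1) * 2 ^ (-(N:ℤ)) := lt_of_le_of_lt hx1.1 hx2.2
  have h2 : (a:ℝ) * 2 ^ (-(N:ℤ)) < ((k:ℝ) + 1) * 2 ^ n := lt_of_le_of_lt hx2.1 hx1.2
  rcases le_or_gt 1 (n + (N:ℤ)) with hc | hc
  · left
    set p := (n + (N:ℤ)).toNat with hpdef
    have hp : n + (N:ℤ) = (p:ℤ) := by omega
    have e : (2:ℝ) ^ n = 2 ^ (p:ℤ) * 2 ^ (-(N:ℤ)) := by
      rw [← zpow_add₀ (two_ne_zero)]; congr 1; omega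
    rw [e, ← mul_assoc] at h1 h2
    replace h1 := (mul_lt_mul_iff_left₀ (by positivity : (0:ℝ) < 2 ^ (-(N:ℤ)))).mp h1
    replace h2 := (mul_lt_mul_iff_left₀ (by positivity : (0:ℝ) < 2 ^ (-(N:ℤ)))).mp h2
    rw [zpow_natCast] at h1 h2
    have hk1 : k * 2 ^ p < (a:ℤ) + 1 := by exact_mod_cast h1
    have hk2 : (a:ℤ) < (k + 1) * 2 ^ p := by exact_mod_cast h2
    have hppos : (0:ℤ) < 2 ^ p := by positivity
    have hk : 0 ≤ k := by nlinarith
    refine ⟨hc, hk, ?_⟩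
    have hn1 : k.toNat * 2 ^ p ≤ a := by
      have : (k.toNat : ℤ) * 2 ^ p < (a:ℤ) + 1 := by rwa [Int.toNat_of_nonneg hk]
      exact_mod_cast Int.lt_add_one_iff.mp this
    have hn2 : a < (k.toNat + 1) * 2 ^ p := by
      have : (a:ℤ) < ((k.toNat:ℤ) + 1) * 2 ^ p := by rwa [Int.toNat_of_nonneg hk]
      exact_mod_cast this
    exact Nat.div_eq_of_lt_le hn1 hn2
  · right
    set q := (-(n + (N:ℤ))).toNat with hqdef
    have hq : -(n + (N:ℤ)) = (q:ℤ) := by omega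
    have e : (2:ℝ) ^ (-(N:ℤ)) = 2 ^ (q:ℤ) * 2 ^ n := by
      rw [← zpow_add₀ (two_ne_zero)]; congr 1; omega
    rw [e, ← mul_assoc] at h1 h2
    replace h1 := (mul_lt_mul_iff_left₀ (by positivity : (0:ℝ) < 2 ^ n)).mp h1
    replace h2 := (mul_lt_mul_iff_left₀ (by positivity : (0:ℝ) < 2 ^ n)).mp h2
    rw [zpow_natCast] at h1 h2
    have hk1 : k < ((a:ℤ) + 1) * 2 ^ q := by exact_mod_cast h1
    have hk2 : (a:ℤ) * 2 ^ q < k + 1 := by exact_mod_cast h2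
    have hppos : (0:ℤ) < 2 ^ q := by positivity
    have hk : 0 ≤ k := by nlinarith
    refine ⟨by omega, hk, ?_⟩
    have hn1 : a * 2 ^ q ≤ k.toNat := by
      have : (a:ℤ) * 2 ^ q < (k.toNat:ℤ) + 1 := by rw [Int.toNat_of_nonneg hk]; exact hk2
      exact_mod_cast Int.lt_add_one_iff.mp this
    have hn2 : k.toNat < (a + 1) * 2 ^ q := by
      have : (k.toNat:ℤ) < ((a:ℤ) + 1) * 2 ^ q := by rwa [Int.toNat_of_nonneg hk]
      exact_mod_cast this
    exact Nat.div_eq_of_lt_le hn1 hn2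

lemma ofReal_two_zpow (n : ℤ) : ENNReal.ofReal ((2:ℝ) ^ n) = (2 : ℝ≥0∞) ^ n := by
  obtain ⟨p, rfl | rfl⟩ := n.eq_nat_or_neg
  · rw [zpow_natCast, zpow_natCast, ENNReal.ofReal_pow (by norm_num)]
    norm_num
  · rw [zpow_neg, ENNReal.zpow_neg, zpow_natCast, zpow_natCast,
      ENNReal.ofReal_inv_of_pos (by positivity), ENNReal.ofReal_pow (by norm_num)]
    norm_num

lemma sub01 (a N : ℕ) (ha : a < 2 ^ N) :
    Set.Ico ((a:ℝ) * 2 ^ (-(N:ℤ))) (((a:ℝ) + 1) * 2 ^ (-(N:ℤ))) ⊆ Set.Ico (0:ℝ) 1 := by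
  apply Set.Ico_subset_Ico
  · positivity
  · have h1 : ((a:ℝ) + 1) ≤ 2 ^ (N:ℤ) := by
      rw [zpow_natCast]
      exact_mod_cast Nat.succ_le_of_lt ha
    have h2 : ((a:ℝ) + 1) * 2 ^ (-(N:ℤ)) ≤ 2 ^ (N:ℤ) * 2 ^ (-(N:ℤ)) :=
      mul_le_mul_of_nonneg_right h1 (by positivity)
    calc ((a:ℝ) + 1) * 2 ^ (-(N:ℤ)) ≤ 2 ^ (N:ℤ) * 2 ^ (-(N:ℤ)) := h2
      _ = 1 := by rw [← zpow_add₀ (two_ne_zero)]; norm_num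

/-- For every `m ≥ 0` there are `2^{2m+1}` dyadic squares of side `2^{-2m-1}` in
`[0,1)²` such that for `i ≠ j`, every dyadic rectangle intersecting both `Q i`
and `Q j` has area at least `2^{-2m}`. -/
theorem stmt4 (m : ℕ) :
    ∃ Q : Fin (2 ^ (2 * m + 1)) → Set (ℝ × ℝ),
      (∀ i, IsDyadicSquare (-(2 * (m : ℤ)) - 1) (Q i) ∧ Q i ⊆ unitSq) ∧
      ∀ i j, i ≠ j → ∀ R : Set (ℝ × ℝ), IsDyadicRect R →
        (R ∩ Q i).Nonempty → (R ∩ Q j).Nonempty →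
        (2 : ℝ≥0∞) ^ (-(2 * (m : ℤ))) ≤ volume R := by
  set N : ℕ := 2 * m + 1 with hN
  have hNs : -(2 * (m : ℤ)) - 1 = -(N:ℤ) := by push_cast [hN]; ring
  refine ⟨fun i => Set.Ico (((i:ℕ):ℝ) * 2 ^ (-(N:ℤ))) ((((i:ℕ):ℝ) + 1) * 2 ^ (-(N:ℤ))) ×ˢ
      Set.Ico ((bitrev N (i:ℕ) : ℝ) * 2 ^ (-(N:ℤ))) (((bitrev N (i:ℕ) : ℝ) + 1) * 2 ^ (-(N:ℤ))),
      ?_, ?_⟩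
  · intro i
    constructor
    · refine ⟨((i:ℕ):ℤ), (bitrev N (i:ℕ) : ℤ), ?_⟩
      rw [hNs]; push_cast; rfl
    · intro z hz
      exact ⟨sub01 _ N i.isLt hz.1, sub01 _ N (bitrev_lt N (i:ℕ)) hz.2⟩
  · intro i j hij R hR hRi hRj
    obtain ⟨I, J, ⟨k₁, n₁, rfl⟩, ⟨k₂, n₂, rfl⟩, rfl⟩ := hR
    obtain ⟨⟨x, y⟩, hxy, hQ⟩ := hRi
    obtain ⟨⟨x', y'⟩, hxy', hQ'⟩ := hRj
    have hijv : (i:ℕ) ≠ (j:ℕ) := fun h => hij (Fin.ext h)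
    have hiN : (i:ℕ) < 2 ^ N := i.isLt
    have hjN : (j:ℕ) < 2 ^ N := j.isLt
    have hrij : bitrev N (i:ℕ) ≠ bitrev N (j:ℕ) := fun h => hijv (bitrev_inj N _ _ hiN hjN h)
    have m1i := meet k₁ n₁ (i:ℕ) N ⟨x, hxy.1, hQ.1⟩
    have m1j := meet k₁ n₁ (j:ℕ) N ⟨x', hxy'.1, hQ'.1⟩
    have m2i := meet k₂ n₂ (bitrev N (i:ℕ)) N ⟨y, hxy.2, hQ.2⟩
    have m2j := meet k₂ n₂ (bitrev N (j:ℕ)) N ⟨y', hxy'.2, hQ'.2⟩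
    rcases m1i with ⟨hc1, hk1, hd1i⟩ | ⟨hc1, hk1, hd1i⟩
    swap
    · rcases m1j with ⟨hc1', _, _⟩ | ⟨_, _, hd1j⟩
      · omega
      · exact (hijv (hd1i.symm.trans hd1j)).elim
    rcases m1j with ⟨_, _, hd1j⟩ | ⟨hc1', _, _⟩
    swap
    · omega
    rcases m2i with ⟨hc2, hk2, hd2i⟩ | ⟨hc2, hk2, hd2i⟩
    swap
    · rcases m2j with ⟨hc2', _, _⟩ | ⟨_, _, hd2j⟩
      · omega
      · exact (hrij (hd2i.symm.trans hd2j)).elim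
    rcases m2j with ⟨_, _, hd2j⟩ | ⟨hc2', _, _⟩
    swap
    · omega
    -- now: hd1i/hd1j : (i:ℕ)/2^p₁ = k₁.toNat = (j:ℕ)/2^p₁, similarly for bitrev
    set p₁ := (n₁ + (N:ℤ)).toNat with hp₁
    set p₂ := (n₂ + (N:ℤ)).toNat with hp₂
    have hdiv1 : (i:ℕ) / 2 ^ p₁ = (j:ℕ) / 2 ^ p₁ := by rw [hd1i, hd1j]
    have hdiv2 : bitrev N (i:ℕ) / 2 ^ p₂ = bitrev N (j:ℕ) / 2 ^ p₂ := by rw [hd2i, hd2j]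
    have hsum : N + 1 ≤ p₁ + p₂ := by
      by_contra hcon
      exact hijv (key_lemma N p₁ p₂ _ _ hiN hjN (by omega) hdiv1 hdiv2)
    -- compute volume
    have hvol : volume ((Set.Ico ((k₁:ℝ) * 2 ^ n₁) (((k₁:ℝ) + 1) * 2 ^ n₁)) ×ˢ
        (Set.Ico ((k₂:ℝ) * 2 ^ n₂) (((k₂:ℝ) + 1) * 2 ^ n₂)))
        = ENNReal.ofReal ((2:ℝ) ^ n₁) * ENNReal.ofReal ((2:ℝ) ^ n₂) := by
      rw [MeasureTheory.Measure.volume_eq_prod ℝ ℝ, MeasureTheory.Measure.prod_prod,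
        Real.volume_Ico, Real.volume_Ico]
      congr 2 <;> ring
    rw [hvol, ofReal_two_zpow, ofReal_two_zpow,
      ← ENNReal.zpow_add (by norm_num) (by norm_num)]
    apply ENNReal.zpow_le_of_le (by norm_num)
    omega
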